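/- On the full shift Y = {0,…,b}^ℕ, fix α > 1 and θ : {0,…,b} → ℝ. Define φ_{θ,α}(y) = Σ_{j≥0} θ(y_j)(α-1)^j / α^{j+1} and H_{θ,α}(y) = e^{(α-1)φ_{θ,α}(y)}. Then L_{φ_{θ,α}} H_{θ,α} = (Σ_{i=0}^{b} e^{θ(i)}) H_{θ,α}. -/

import Mathlib

open Real

set_option maxHeartbeats 1000000

noncomputable section

/-- Prepending a symbol: `σ^{-1}y = {cons i y : i ∈ A}` on the full shift. -/
def cons {A : Type*} (i : A) (y : ℕ → A) : ℕ → A := fun n =>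
  match n with
  | 0 => i
  | k + 1 => y k

/-- The potential `φ_{θ,α}(y) = ∑_{j ≥ 0} θ(y_j)(α-1)^j / α^{j+1}`. -/
noncomputable def phiThetaAlpha (b : ℕ) (θ : Fin (b + 1) → ℝ) (α : ℝ)
    (y : ℕ → Fin (b + 1)) : ℝ :=
  ∑' j : ℕ, θ (y j) * (α - 1) ^ j / α ^ (j + 1)

/-- The function `H_{θ,α}(y) = e^{(α-1)φ_{θ,α}(y)}`. -/
noncomputable def HThetaAlpha (b : ℕ) (θ : Fin (b + 1) → ℝ) (α : ℝ)
    (y : ℕ → Fin (b + 1)) : ℝ :=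
  Real.exp ((α - 1) * phiThetaAlpha b θ α y)

lemma summable_phi (b : ℕ) (θ : Fin (b + 1) → ℝ) (α : ℝ) (hα : 1 < α)
    (y : ℕ → Fin (b + 1)) :
    Summable (fun j : ℕ => θ (y j) * (α - 1) ^ j / α ^ (j + 1)) := by
  have hα0 : (0:ℝ) < α := lt_trans one_pos hα
  have hr0 : (0:ℝ) ≤ (α - 1) / α := div_nonneg (by linarith) hα0.le
  have hr1 : (α - 1) / α < 1 := (div_lt_one hα0).2 (by linarith)
  set M : ℝ := ∑ i : Fin (b + 1), |θ i| with hM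
  have hMb : ∀ i : Fin (b + 1), |θ i| ≤ M := fun i =>
    Finset.single_le_sum (fun j _ => abs_nonneg (θ j)) (Finset.mem_univ i)
  apply Summable.of_norm_bounded (g := fun j : ℕ => (M / α) * ((α - 1) / α) ^ j)
    ((summable_geometric_of_lt_one hr0 hr1).mul_left _)
  · intro j
    have : ‖θ (y j) * (α - 1) ^ j / α ^ (j + 1)‖ =
        |θ (y j)| * ((α - 1) ^ j / α ^ (j + 1)) := by
      rw [Real.norm_eq_abs, abs_div, abs_mul, abs_of_nonneg (pow_nonneg (show (0:ℝ) ≤ α - 1 by linarith) j),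
        abs_of_nonneg (pow_nonneg hα0.le _), mul_div_assoc]
    rw [this]
    have heq : (M / α) * ((α - 1) / α) ^ j = M * ((α - 1) ^ j / α ^ (j + 1)) := by
      rw [div_pow, pow_succ]
      ring
    rw [heq]
    exact mul_le_mul_of_nonneg_right (hMb (y j))
      (div_nonneg (pow_nonneg (by linarith) j) (pow_nonneg hα0.le _))

lemma phi_cons (b : ℕ) (θ : Fin (b + 1) → ℝ) (α : ℝ) (hα : 1 < α)
    (i : Fin (b + 1)) (y : ℕ → Fin (b + 1)) :
    phiThetaAlpha b θ α (cons i y)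
      = θ i / α + (α - 1) / α * phiThetaAlpha b θ α y := by
  have hα0 : (0:ℝ) < α := lt_trans one_pos hα
  unfold phiThetaAlpha
  rw [Summable.tsum_eq_zero_add (summable_phi b θ α hα (cons i y))]
  have h0 : θ (cons i y 0) * (α - 1) ^ 0 / α ^ (0 + 1) = θ i / α := by
    simp [cons]
  rw [h0]
  congr 1
  have hcongr : ∀ j : ℕ, θ (cons i y (j + 1)) * (α - 1) ^ (j + 1) / α ^ (j + 1 + 1)
      = (α - 1) / α * (θ (y j) * (α - 1) ^ j / α ^ (j + 1)) := by
    intro j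
    show θ (y j) * (α - 1) ^ (j + 1) / α ^ (j + 2) = _
    rw [pow_succ (α - 1) j, show j+1+1 = j+2 from rfl, pow_succ α (j+1)]
    field_simp
  rw [tsum_congr hcongr, tsum_mul_left]

/-- `L_{φ_{θ,α}} H_{θ,α} = (∑_{i=0}^b e^{θ(i)}) H_{θ,α}`, where
`L_φ f(y) = ∑_{z ∈ σ^{-1}y} e^{φ(z)} f(z)`. -/
theorem stmt3 (b : ℕ) (θ : Fin (b + 1) → ℝ) (α : ℝ) (hα : 1 < α) :
    ∀ y : ℕ → Fin (b + 1),
      (∑ i : Fin (b + 1),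
          Real.exp (phiThetaAlpha b θ α (cons i y)) * HThetaAlpha b θ α (cons i y)) =
        (∑ i : Fin (b + 1), Real.exp (θ i)) * HThetaAlpha b θ α y := by
  intro y
  have hα0 : (0:ℝ) < α := lt_trans one_pos hα
  rw [Finset.sum_mul]
  apply Finset.sum_congr rfl
  intro i _
  unfold HThetaAlpha
  rw [← Real.exp_add, ← Real.exp_add]
  congr 1
  rw [phi_cons b θ α hα i y]
  field_simp
  ring
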